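/- arXiv:1310.7197 — 2 statements merged into one kernel-verified Lean document; each statement's English description precedes it below -/
import Mathlib

section
/- The weak visibility polygon of a segment in a compact region is closed: if P ⊆ ℝ² is compact, then WVP(pq) is a closed set. -/
theorem wvp_isClosed_of_compact (P : Set (EuclideanSpace ℝ (Fin 2)))
    (hP : IsCompact P) (p q : EuclideanSpace ℝ (Fin 2)) (hp : p ∈ P) (hq : q ∈ P) :
    IsClosed {x ∈ P | ∃ w ∈ segment ℝ p q, segment ℝ w x ⊆ P} := by
  have hPc : IsClosed P := hP.isClosed
  apply IsSeqClosed.isClosed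
  intro xs x hxs hlim
  choose hxP ws hws hseg using hxs
  have hcs : IsCompact (segment ℝ p q) := by
    rw [segment_eq_image_lineMap]
    exact isCompact_Icc.image AffineMap.lineMap_continuous
  obtain ⟨w, hw, φ, hφ, hwl⟩ := hcs.tendsto_subseq hws
  refine ⟨hPc.mem_of_tendsto hlim (Filter.Eventually.of_forall hxP), w, hw, ?_⟩
  intro y hy
  obtain ⟨a, b, ha, hb, hab, rfl⟩ := hy
  have ht : Filter.Tendsto (fun n => a • ws (φ n) + b • xs (φ n)) Filter.atTop
      (nhds (a • w + b • x)) :=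
    (hwl.const_smul a).add ((hlim.comp hφ.tendsto_atTop).const_smul b)
  exact hPc.mem_of_tendsto ht (Filter.Eventually.of_forall fun n =>
    hseg (φ n) ⟨a, b, ha, hb, hab, rfl⟩)
end

section
/- If P is open, the weak visibility polygon WVP(pq) of any segment [p,q] ⊆ P is open. -/
theorem wvp_isOpen_of_open (P : Set (EuclideanSpace ℝ (Fin 2)))
    (hP : IsOpen P) (p q : EuclideanSpace ℝ (Fin 2))
    (hpq : segment ℝ p q ⊆ P) :
    IsOpen {x ∈ P | ∃ w ∈ segment ℝ p q, segment ℝ w x ⊆ P} := by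
  rw [Metric.isOpen_iff]
  rintro x ⟨hxP, w, hw, hseg⟩
  have hcomp : IsCompact (segment ℝ w x) := by
    rw [segment_eq_image]
    exact isCompact_Icc.image (by continuity)
  obtain ⟨δ, hδ, hthick⟩ := hcomp.exists_thickening_subset_open hP hseg
  refine ⟨δ, hδ, fun y hy => ?_⟩
  have key : segment ℝ w y ⊆ P := by
    intro z hz
    obtain ⟨a, b, ha, hb, hab, rfl⟩ := hz
    apply hthick
    rw [Metric.mem_thickening_iff]
    refine ⟨a • w + b • x, ⟨a, b, ha, hb, hab, rfl⟩, ?_⟩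
    have : dist (a • w + b • y) (a • w + b • x) = b * dist y x := by
      rw [dist_add_left, dist_smul₀, Real.norm_of_nonneg hb]
    rw [this]
    calc b * dist y x ≤ 1 * dist y x := by
          apply mul_le_mul_of_nonneg_right _ dist_nonneg
          linarith
      _ = dist y x := one_mul _
      _ < δ := hy
  exact ⟨key (right_mem_segment ℝ w y), w, hw, key⟩
end
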